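/- Let d ≥ 2, on (ℂ^d)^{⊗3} let H = S_{12} + S_{13}, and let ψ ∈ ℂ^d be a unit vector that is not proportional to |0⟩. If t ∈ ℝ satisfies e^{3it} ≠ 1, then the reduced density matrix on the second tensor factor (observer A's memory) of the evolved state e^{−itH}(ψ⊗|0⟩⊗|0⟩) is not pure (it has rank at least 2); in particular, observer A's memory remains entangled with the rest of the system after the simultaneous swap measurement. -/

import Mathlib

open Matrix Kronecker
open scoped ComplexOrder

noncomputable section

abbrev Mat (n : ℕ) := Matrix (Fin n) (Fin n) ℂ

/-- A density matrix: positive semidefinite with trace 1. -/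
def IsDensity {n : Type*} [Fintype n] (ρ : Matrix n n ℂ) : Prop :=
  ρ.PosSemidef ∧ ρ.trace = 1

/-- The rank-one projector `|ψ⟩⟨ψ|`. -/
def proj {n : Type*} (ψ : n → ℂ) : Matrix n n ℂ :=
  Matrix.of fun i j => ψ i * star (ψ j)

/-- Partial trace over the first tensor factor. -/
def trFst {a b : Type*} [Fintype a] (X : Matrix (a × b) (a × b) ℂ) : Matrix b b ℂ :=
  Matrix.of fun j l => ∑ i : a, X (i, j) (i, l)

/-- Partial trace over the second tensor factor. -/
def trSnd {a b : Type*} [Fintype b] (X : Matrix (a × b) (a × b) ℂ) : Matrix a a ℂ :=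
  Matrix.of fun i k => ∑ j : b, X (i, j) (k, j)

/-- `id ⊗ Φ` acting on matrices over a product index type. -/
def idTensor {k d m : Type*} (Φ : Matrix d d ℂ → Matrix m m ℂ)
    (X : Matrix (k × d) (k × d) ℂ) : Matrix (k × m) (k × m) ℂ :=
  Matrix.of fun p q => Φ (Matrix.of fun j l => X (p.1, j) (q.1, l)) p.2 q.2

/-- Complete positivity. -/
def IsCP {d m : ℕ} (Φ : Mat d → Mat m) : Prop :=
  ∀ (k : ℕ) (X : Matrix (Fin k × Fin d) (Fin k × Fin d) ℂ),
    X.PosSemidef → (idTensor Φ X).PosSemidef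

/-- Trace preservation. -/
def IsTP {d m : ℕ} (Φ : Mat d → Mat m) : Prop :=
  ∀ X, (Φ X).trace = X.trace

/-- A quantum channel: linear, completely positive, trace preserving. -/
def IsChannel {d m : ℕ} (Φ : Mat d → Mat m) : Prop :=
  IsLinearMap ℂ Φ ∧ IsCP Φ ∧ IsTP Φ

/-- The maximally entangled unit vector `|Φ⁺⟩ = (1/√d) ∑ₖ |k⟩⊗|k⟩`. -/
def phiPlusVec (d : ℕ) : Fin d × Fin d → ℂ :=
  fun p => if p.1 = p.2 then ((Real.sqrt d : ℝ) : ℂ)⁻¹ else 0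

/-- The density matrix of the maximally entangled state. -/
def phiPlus (d : ℕ) : Matrix (Fin d × Fin d) (Fin d × Fin d) ℂ :=
  proj (phiPlusVec d)

/-- Von Neumann entropy `S(ρ) = -∑ λᵢ log λᵢ` over the eigenvalues of `ρ`. -/
def entropy {n : Type*} [Fintype n] [DecidableEq n] (ρ : Matrix n n ℂ) : ℝ :=
  if h : ρ.IsHermitian then -∑ i, h.eigenvalues i * Real.log (h.eigenvalues i) else 0

/-- Quantum mutual information of a bipartite state. -/
def mutualInfo {a b : Type*} [Fintype a] [Fintype b] [DecidableEq a] [DecidableEq b]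
    (τ : Matrix (a × b) (a × b) ℂ) : ℝ :=
  entropy (trSnd τ) + entropy (trFst τ) - entropy τ

/-- Elementary tensor of three vectors on `(ℂ^d)^{⊗3}`. -/
def tp3 {d : ℕ} (x y z : Fin d → ℂ) : Fin d × Fin d × Fin d → ℂ :=
  fun p => x p.1 * y p.2.1 * z p.2.2

/-- The basis vector `|0⟩` of `ℂ^d`. -/
def e0vec (d : ℕ) : Fin d → ℂ := fun i => if (i : ℕ) = 0 then 1 else 0

/-- The unitary swapping the first and second tensor factors. -/
def S12 (d : ℕ) : Matrix (Fin d × Fin d × Fin d) (Fin d × Fin d × Fin d) ℂ :=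
  Matrix.of fun p q => if p.1 = q.2.1 ∧ p.2.1 = q.1 ∧ p.2.2 = q.2.2 then 1 else 0

/-- The unitary swapping the first and third tensor factors. -/
def S13 (d : ℕ) : Matrix (Fin d × Fin d × Fin d) (Fin d × Fin d × Fin d) ℂ :=
  Matrix.of fun p q => if p.1 = q.2.2 ∧ p.2.1 = q.2.1 ∧ p.2.2 = q.1 then 1 else 0

/-- The reduced density matrix on the second factor of a tripartite vector state. -/
def redSecond {d : ℕ} (v : Fin d × Fin d × Fin d → ℂ) : Mat d :=
  Matrix.of fun j l => ∑ i : Fin d, ∑ k : Fin d, v (i, j, k) * star (v (i, l, k))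

open scoped Nat

-- auxiliary
theorem exp_mulVec_eig {n : Type*} [Fintype n] [DecidableEq n]
    (M : Matrix n n ℂ) (u : n → ℂ) (μ : ℂ) (h : M *ᵥ u = μ • u) :
    NormedSpace.exp M *ᵥ u = Complex.exp μ • u := by
  letI : SeminormedRing (Matrix n n ℂ) := Matrix.linftyOpSemiNormedRing
  letI : NormedRing (Matrix n n ℂ) := Matrix.linftyOpNormedRing
  letI : NormedAlgebra ℂ (Matrix n n ℂ) := Matrix.linftyOpNormedAlgebra
  have hpow : ∀ k : ℕ, M ^ k *ᵥ u = μ ^ k • u := by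
    intro k
    induction k with
    | zero => simp
    | succ k ih =>
        rw [pow_succ, pow_succ, ← Matrix.mulVec_mulVec, h, Matrix.mulVec_smul, ih,
          smul_smul, mul_comm]
  have hsum : Summable (fun k : ℕ => (k ! : ℂ)⁻¹ • M ^ k) :=
    NormedSpace.expSeries_summable' M
  let L : Matrix n n ℂ →ₗ[ℂ] (n → ℂ) :=
    { toFun := fun X => X *ᵥ u
      map_add' := fun X Y => Matrix.add_mulVec X Y u
      map_smul' := fun c X => Matrix.smul_mulVec c X u }
  have hLc : Continuous L := L.continuous_of_finiteDimensional
  have key : L (NormedSpace.exp M) = ∑' k : ℕ, L ((k ! : ℂ)⁻¹ • M ^ k) := by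
    rw [NormedSpace.exp_eq_tsum (𝕂 := ℂ)]
    exact ((hsum.hasSum.map L.toAddMonoidHom hLc).tsum_eq).symm
  have h2 : NormedSpace.exp M *ᵥ u = ∑' k : ℕ, ((k ! : ℂ)⁻¹ * μ ^ k) • u := by
    refine key.trans ?_
    congr 1
    funext k
    show ((k ! : ℂ)⁻¹ • M ^ k) *ᵥ u = _
    rw [Matrix.smul_mulVec, hpow, smul_smul]
  rw [h2, Summable.tsum_smul_const ?_, Complex.exp_eq_exp_ℂ, NormedSpace.exp_eq_tsum (𝕂 := ℂ)]
  · simp [smul_eq_mul]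
  · simpa [smul_eq_mul] using NormedSpace.expSeries_summable' (𝕂 := ℂ) μ

theorem S12_mulVec {d : ℕ} (v : Fin d × Fin d × Fin d → ℂ) :
    S12 d *ᵥ v = fun p => v (p.2.1, p.1, p.2.2) := by
  funext p
  show ∑ q, (if p.1 = q.2.1 ∧ p.2.1 = q.1 ∧ p.2.2 = q.2.2 then (1:ℂ) else 0) * v q = _
  rw [Finset.sum_eq_single (p.2.1, p.1, p.2.2)]
  · simp
  · rintro ⟨a, b, c⟩ - hne
    have : ¬(p.1 = b ∧ p.2.1 = a ∧ p.2.2 = c) := by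
      rintro ⟨h1, h2, h3⟩; exact hne (by simp [← h1, ← h2, ← h3])
    simp [this]
  · simp

theorem S13_mulVec {d : ℕ} (v : Fin d × Fin d × Fin d → ℂ) :
    S13 d *ᵥ v = fun p => v (p.2.2, p.2.1, p.1) := by
  funext p
  show ∑ q, (if p.1 = q.2.2 ∧ p.2.1 = q.2.1 ∧ p.2.2 = q.1 then (1:ℂ) else 0) * v q = _
  rw [Finset.sum_eq_single (p.2.2, p.2.1, p.1)]
  · simp
  · rintro ⟨a, b, c⟩ - hne
    have : ¬(p.1 = c ∧ p.2.1 = b ∧ p.2.2 = a) := by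
      rintro ⟨h1, h2, h3⟩; exact hne (by simp [← h1, ← h2, ← h3])
    simp [this]
  · simp

theorem star_e0 {d : ℕ} (k : Fin d) : star (e0vec d k) = e0vec d k := by
  simp [e0vec, apply_ite]

theorem e0_apply {d : ℕ} [NeZero d] (k : Fin d) : e0vec d k = if k = 0 then 1 else 0 := by
  simp only [e0vec, Fin.val_eq_zero_iff]

theorem quad_sum {d : ℕ} [NeZero d] (ψ : Fin d → ℂ)
    (hψ : ∑ i, star (ψ i) * ψ i = 1) (C1 C2 C3 C4 : ℂ) :
    ∑ i : Fin d, (C1 * (ψ i * star (ψ i)) + C2 * (ψ i * e0vec d i)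
      + C3 * (e0vec d i * star (ψ i)) + C4 * (e0vec d i * e0vec d i))
      = C1 + C2 * ψ 0 + C3 * star (ψ 0) + C4 := by
  have s1 : ∑ i, ψ i * star (ψ i) = 1 := by
    rw [← hψ]; exact Finset.sum_congr rfl fun i _ => mul_comm _ _
  have s2 : ∑ i, ψ i * e0vec d i = ψ 0 := by
    simp [e0_apply, mul_ite, Finset.sum_ite_eq']
  have s3 : ∑ i, e0vec d i * star (ψ i) = star (ψ 0) := by
    simp [e0_apply, ite_mul, Finset.sum_ite_eq]
  have s4 : ∑ i, e0vec d i * e0vec d i = 1 := by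
    simp [e0_apply, ite_mul, mul_ite, Finset.sum_ite_eq]
  simp only [Finset.sum_add_distrib, ← Finset.mul_sum, s1, s2, s3, s4, mul_one]


/-- After a simultaneous swap measurement at a time with `e^{3it} ≠ 1` on a system state not
proportional to `|0⟩`, observer A's memory is not pure (it has rank at least 2), i.e. it
remains entangled with the rest of the system. -/
theorem stmt_19 (d : ℕ) (hd : 2 ≤ d) (ψ : Fin d → ℂ) (hψ : star ψ ⬝ᵥ ψ = 1)
    (hnp : ¬ ∃ c : ℂ, ψ = c • e0vec d) (t : ℝ)
    (ht : Complex.exp (3 * Complex.I * (t : ℂ)) ≠ 1) :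
    (¬ ∃ v : Fin d → ℂ, star v ⬝ᵥ v = 1 ∧
        redSecond (NormedSpace.exp ((-(Complex.I * (t : ℂ))) • (S12 d + S13 d)) *ᵥ
          tp3 ψ (e0vec d) (e0vec d)) = proj v) ∧
    2 ≤ (redSecond (NormedSpace.exp ((-(Complex.I * (t : ℂ))) • (S12 d + S13 d)) *ᵥ
          tp3 ψ (e0vec d) (e0vec d))).rank := by
  haveI : NeZero d := ⟨by omega⟩
  have hψ' : ∑ i, star (ψ i) * ψ i = 1 := by simpa [dotProduct] using hψ
  set c : ℂ := -(Complex.I * (t : ℂ)) with hc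
  obtain ⟨A, hA⟩ : ∃ x : ℂ, x = 3⁻¹ * (Complex.exp (2*c) + 2 * Complex.exp (-c)) := ⟨_, rfl⟩
  obtain ⟨B, hB⟩ : ∃ x : ℂ, x = 3⁻¹ * (Complex.exp (2*c) - Complex.exp (-c)) := ⟨_, rfl⟩
  -- the evolved state
  have hΦ : NormedSpace.exp (c • (S12 d + S13 d)) *ᵥ tp3 ψ (e0vec d) (e0vec d)
      = fun p => A * (ψ p.1 * e0vec d p.2.1 * e0vec d p.2.2)
          + B * (e0vec d p.1 * ψ p.2.1 * e0vec d p.2.2)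
          + B * (e0vec d p.1 * e0vec d p.2.1 * ψ p.2.2) := by
    set u : Fin d × Fin d × Fin d → ℂ := fun p =>
      ψ p.1 * e0vec d p.2.1 * e0vec d p.2.2 + e0vec d p.1 * ψ p.2.1 * e0vec d p.2.2
        + e0vec d p.1 * e0vec d p.2.1 * ψ p.2.2 with hu_def
    set w : Fin d × Fin d × Fin d → ℂ := fun p =>
      2 * (ψ p.1 * e0vec d p.2.1 * e0vec d p.2.2) - e0vec d p.1 * ψ p.2.1 * e0vec d p.2.2
        - e0vec d p.1 * e0vec d p.2.1 * ψ p.2.2 with hw_def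
    have hHu : (c • (S12 d + S13 d)) *ᵥ u = (2 * c) • u := by
      rw [Matrix.smul_mulVec, Matrix.add_mulVec, S12_mulVec, S13_mulVec]
      funext p
      simp only [hu_def, Pi.add_apply, Pi.smul_apply, smul_eq_mul]
      ring
    have hHw : (c • (S12 d + S13 d)) *ᵥ w = (-c) • w := by
      rw [Matrix.smul_mulVec, Matrix.add_mulVec, S12_mulVec, S13_mulVec]
      funext p
      simp only [hw_def, Pi.add_apply, Pi.smul_apply, smul_eq_mul]
      ring
    have hdec : tp3 ψ (e0vec d) (e0vec d) = (3:ℂ)⁻¹ • u + (3:ℂ)⁻¹ • w := by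
      funext p
      simp only [tp3, Pi.add_apply, Pi.smul_apply, smul_eq_mul, hu_def, hw_def]
      ring
    rw [hdec, Matrix.mulVec_add, Matrix.mulVec_smul, Matrix.mulVec_smul,
      exp_mulVec_eig _ u (2*c) hHu, exp_mulVec_eig _ w (-c) hHw]
    funext p
    simp only [Pi.add_apply, Pi.smul_apply, smul_eq_mul, hu_def, hw_def, hA, hB]
    ring
  rw [hΦ]
  -- entry formula for the reduced state
  have hentry : ∀ j l : Fin d,
      redSecond (fun p => A * (ψ p.1 * e0vec d p.2.1 * e0vec d p.2.2)
          + B * (e0vec d p.1 * ψ p.2.1 * e0vec d p.2.2)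
          + B * (e0vec d p.1 * e0vec d p.2.1 * ψ p.2.2)) j l
        = B * star B * (ψ j * star (ψ l))
          + (A + B) * star B * ψ 0 * (e0vec d j * star (ψ l))
          + (star A + star B) * B * star (ψ 0) * (ψ j * e0vec d l)
          + (A * star A + B * star B
              + (A * star B + star A * B) * (ψ 0 * star (ψ 0))) * (e0vec d j * e0vec d l) := by
    intro j l
    have inner : ∀ i : Fin d,
        ∑ k : Fin d, ((A * (ψ i * e0vec d j * e0vec d k)
            + B * (e0vec d i * ψ j * e0vec d k) + B * (e0vec d i * e0vec d j * ψ k))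
          * star (A * (ψ i * e0vec d l * e0vec d k)
            + B * (e0vec d i * ψ l * e0vec d k) + B * (e0vec d i * e0vec d l * ψ k)))
        = ((B * (e0vec d i * e0vec d j)) * (star B * (e0vec d i * e0vec d l)))
          + ((B * (e0vec d i * e0vec d j)) * (star A * star (ψ i) * e0vec d l
              + star B * (e0vec d i * star (ψ l)))) * ψ 0
          + ((A * ψ i * e0vec d j + B * (e0vec d i * ψ j))
              * (star B * (e0vec d i * e0vec d l))) * star (ψ 0)
          + ((A * ψ i * e0vec d j + B * (e0vec d i * ψ j))
              * (star A * star (ψ i) * e0vec d l + star B * (e0vec d i * star (ψ l)))) := by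
      intro i
      calc ∑ k : Fin d, ((A * (ψ i * e0vec d j * e0vec d k)
            + B * (e0vec d i * ψ j * e0vec d k) + B * (e0vec d i * e0vec d j * ψ k))
          * star (A * (ψ i * e0vec d l * e0vec d k)
            + B * (e0vec d i * ψ l * e0vec d k) + B * (e0vec d i * e0vec d l * ψ k)))
          = ∑ k : Fin d,
            (((B * (e0vec d i * e0vec d j)) * (star B * (e0vec d i * e0vec d l)))
                * (ψ k * star (ψ k))
              + ((B * (e0vec d i * e0vec d j)) * (star A * star (ψ i) * e0vec d l
                  + star B * (e0vec d i * star (ψ l)))) * (ψ k * e0vec d k)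
              + ((A * ψ i * e0vec d j + B * (e0vec d i * ψ j))
                  * (star B * (e0vec d i * e0vec d l))) * (e0vec d k * star (ψ k))
              + ((A * ψ i * e0vec d j + B * (e0vec d i * ψ j))
                  * (star A * star (ψ i) * e0vec d l + star B * (e0vec d i * star (ψ l))))
                * (e0vec d k * e0vec d k)) := by
            refine Finset.sum_congr rfl fun k _ => ?_
            simp only [star_add, StarMul.star_mul, star_e0]
            ring
        _ = _ := by rw [quad_sum ψ hψ']
    calc redSecond (fun p => A * (ψ p.1 * e0vec d p.2.1 * e0vec d p.2.2)
          + B * (e0vec d p.1 * ψ p.2.1 * e0vec d p.2.2)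
          + B * (e0vec d p.1 * e0vec d p.2.1 * ψ p.2.2)) j l
        = ∑ i : Fin d, ∑ k : Fin d, ((A * (ψ i * e0vec d j * e0vec d k)
            + B * (e0vec d i * ψ j * e0vec d k) + B * (e0vec d i * e0vec d j * ψ k))
          * star (A * (ψ i * e0vec d l * e0vec d k)
            + B * (e0vec d i * ψ l * e0vec d k) + B * (e0vec d i * e0vec d l * ψ k))) := rfl
      _ = ∑ i : Fin d,
            ((A * star A * (e0vec d j * e0vec d l)) * (ψ i * star (ψ i))
              + (A * star B * e0vec d j * (star (ψ l) + star (ψ 0) * e0vec d l))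
                  * (ψ i * e0vec d i)
              + (B * star A * e0vec d l * (ψ j + ψ 0 * e0vec d j)) * (e0vec d i * star (ψ i))
              + (B * star B * (e0vec d j * e0vec d l + ψ 0 * e0vec d j * star (ψ l)
                  + star (ψ 0) * ψ j * e0vec d l + ψ j * star (ψ l)))
                * (e0vec d i * e0vec d i)) := by
            refine Finset.sum_congr rfl fun i _ => ?_
            rw [inner i]
            ring
      _ = _ := by rw [quad_sum ψ hψ']; ring
  -- find a component away from 0
  obtain ⟨m, hm0, hmne⟩ : ∃ m : Fin d, m ≠ 0 ∧ ψ m ≠ 0 := by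
    by_contra hcon
    push_neg at hcon
    exact hnp ⟨ψ 0, funext fun i => by
      by_cases hi : i = 0
      · subst hi; simp [e0_apply]
      · simp [Pi.smul_apply, smul_eq_mul, e0_apply, hi, hcon i hi]⟩
  have e00 : e0vec d (0 : Fin d) = 1 := by simp [e0_apply]
  have e0m : e0vec d m = 0 := by simp [e0_apply, hm0]
  -- scalar facts
  have hstar : ∀ z : ℂ, z * star z = (Complex.normSq z : ℂ) := fun z => by
    rw [show (star z : ℂ) = (starRingEnd ℂ) z from congrFun Complex.star_def z,
      Complex.mul_conj]
  have hBne : B ≠ 0 := by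
    have hne3 : Complex.exp (3 * c) ≠ 1 := by
      intro hcontr
      apply ht
      have h0 : (3 : ℂ) * c = -(3 * Complex.I * (t : ℂ)) := by rw [hc]; ring
      rw [h0, Complex.exp_neg, inv_eq_one] at hcontr
      exact hcontr
    have h23 : Complex.exp (-c) * Complex.exp (3 * c) = Complex.exp (2 * c) := by
      rw [← Complex.exp_add]; congr 1; ring
    have hfac : Complex.exp (2 * c) - Complex.exp (-c)
        = Complex.exp (-c) * (Complex.exp (3 * c) - 1) := by
      rw [mul_sub, h23, mul_one]
    rw [hB, hfac]
    exact mul_ne_zero (by norm_num) (mul_ne_zero (Complex.exp_ne_zero _) (sub_ne_zero.mpr hne3))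
  have hsum1 : ∑ i, Complex.normSq (ψ i) = 1 := by
    have h1 : ((∑ i, Complex.normSq (ψ i) : ℝ) : ℂ) = 1 := by
      push_cast
      rw [← hψ']
      refine Finset.sum_congr rfl fun i _ => ?_
      rw [← hstar (ψ i)]
      ring
    exact_mod_cast h1
  have haux : Complex.normSq (ψ 0) < 1 := by
    have hpos : 0 < Complex.normSq (ψ m) := Complex.normSq_pos.mpr hmne
    have hle : Complex.normSq (ψ 0) + Complex.normSq (ψ m) ≤ 1 := by
      calc Complex.normSq (ψ 0) + Complex.normSq (ψ m)
          = ∑ i ∈ ({0, m} : Finset (Fin d)), Complex.normSq (ψ i) :=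
            (Finset.sum_pair (f := fun i => Complex.normSq (ψ i)) (Ne.symm hm0)).symm
        _ ≤ ∑ i, Complex.normSq (ψ i) :=
            Finset.sum_le_sum_of_subset_of_nonneg (Finset.subset_univ _)
              (fun i _ _ => Complex.normSq_nonneg _)
        _ = 1 := hsum1
    linarith
  set ρ : Mat d := redSecond (fun p => A * (ψ p.1 * e0vec d p.2.1 * e0vec d p.2.2)
      + B * (e0vec d p.1 * ψ p.2.1 * e0vec d p.2.2)
      + B * (e0vec d p.1 * e0vec d p.2.1 * ψ p.2.2)) with hρ
  have hdetne : ρ 0 0 * ρ m m - ρ 0 m * ρ m 0 ≠ 0 := by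
    have key : ρ 0 0 * ρ m m - ρ 0 m * ρ m 0
        = (ψ m * star (ψ m)) * ((B * star B) *
            ((A * star A + B * star B) * (1 - ψ 0 * star (ψ 0)))) := by
      rw [hentry, hentry, hentry, hentry, e00, e0m]
      ring
    rw [key, hstar, hstar, hstar, hstar]
    refine mul_ne_zero ?_ (mul_ne_zero ?_ (mul_ne_zero ?_ ?_))
    · exact Complex.ofReal_ne_zero.mpr (ne_of_gt (Complex.normSq_pos.mpr hmne))
    · exact Complex.ofReal_ne_zero.mpr (ne_of_gt (Complex.normSq_pos.mpr hBne))
    · have : (0:ℝ) < Complex.normSq A + Complex.normSq B := by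
        have := Complex.normSq_pos.mpr hBne
        have := Complex.normSq_nonneg A
        linarith
      rw [← Complex.ofReal_add]
      exact Complex.ofReal_ne_zero.mpr (ne_of_gt this)
    · rw [show (1 : ℂ) - (Complex.normSq (ψ 0) : ℂ) = ((1 - Complex.normSq (ψ 0) : ℝ) : ℂ) by
        push_cast; ring]
      exact Complex.ofReal_ne_zero.mpr (ne_of_gt (by linarith))
  have rank2 : 2 ≤ ρ.rank := by
    set f : Fin 2 → Fin d := ![0, m] with hf
    have hf0 : f 0 = 0 := rfl
    have hf1 : f 1 = m := rfl
    set P : Matrix (Fin 2) (Fin d) ℂ := Matrix.of fun i k => if k = f i then 1 else 0 with hP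
    set Cm : Matrix (Fin d) (Fin 2) ℂ := Matrix.of fun k i => if k = f i then 1 else 0 with hC
    have hPXC : P * ρ * Cm = Matrix.of fun i j => ρ (f i) (f j) := by
      ext i j
      simp [hP, hC, Matrix.mul_apply, ite_mul, mul_ite, Finset.sum_ite_eq, Finset.sum_ite_eq']
    have hdet2 : (Matrix.of fun i j => ρ (f i) (f j) : Mat 2).det ≠ 0 := by
      rw [Matrix.det_fin_two]
      simp only [Matrix.of_apply, hf0, hf1]
      exact hdetne
    have hrk : (Matrix.of fun i j => ρ (f i) (f j) : Mat 2).rank = 2 := by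
      rw [Matrix.rank_of_isUnit _
        ((Matrix.isUnit_iff_isUnit_det _).mpr (isUnit_iff_ne_zero.mpr hdet2))]
      simp
    calc (2:ℕ) = (Matrix.of fun i j => ρ (f i) (f j) : Mat 2).rank := hrk.symm
      _ = (P * ρ * Cm).rank := by rw [hPXC]
      _ ≤ (ρ * Cm).rank := by rw [Matrix.mul_assoc]; exact Matrix.rank_mul_le_right _ _
      _ ≤ ρ.rank := Matrix.rank_mul_le_left _ _
  refine ⟨fun hcon => ?_, rank2⟩
  obtain ⟨v, -, hveq⟩ := hcon
  have hle : (proj v).rank ≤ 1 := by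
    have hfact : proj v = Matrix.replicateCol Unit v * Matrix.replicateRow Unit (star v) := by
      ext i j
      simp [proj, Matrix.mul_apply, Matrix.replicateCol, Matrix.replicateRow]
    calc (proj v).rank ≤ (Matrix.replicateCol Unit v).rank := hfact ▸ Matrix.rank_mul_le_left _ _
      _ ≤ Fintype.card Unit := Matrix.rank_le_card_width _
      _ = 1 := by simp
  rw [hveq] at rank2
  omega


end
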